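/- Let k ≥ 1, ξ_k = exp(2πi/2^k), and let α, β, γ be integers. Then there exists a symmetric 2×2 integer matrix R such that the 4×4 diagonal matrix diag(1, ξ_k^α, ξ_k^β, ξ_k^γ) (indexed by (v_1,v_2) ∈ {0,1}^2 in the order 00, 01, 10, 11) equals τ_R^{(k+1)}, where τ_R^{(k+1)} := diag(ξ_{k+1}^{v R v^T mod 2^{k+1}}) with ξ_{k+1} = exp(2πi/2^{k+1}). In particular, every two-qubit diagonal unitary whose diagonal entries are 2^k-th roots of unity with first entry 1 is of the form τ_R^{(ℓ)} for ℓ = k+1. -/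
import Mathlib


open Complex Matrix

namespace CliffordHierarchy

noncomputable section

variable {ι : Type*} [Fintype ι] [DecidableEq ι]

/-- Embed a binary vector (entries in `ZMod 2`) into ℤ as a 0/1 vector. -/
def toZ (v : ι → ZMod 2) : ι → ℤ := fun i => ((v i).val : ℤ)

/-- Reduce an integer vector mod 2, viewed in `ZMod 2`. -/
def red2 (a : ι → ℤ) : ι → ZMod 2 := fun i => ((a i : ZMod 2))

/-- Dot product of integer row vectors, over ℤ. -/
def dotZ (x y : ι → ℤ) : ℤ := ∑ i, x i * y i

/-- Bilinear form `x R yᵀ` over ℤ. -/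
def bil (R : Matrix ι ι ℤ) (x y : ι → ℤ) : ℤ := ∑ i, ∑ j, x i * R i j * y j

/-- η(v; R, w) = [(v + w) − (v ∗ w)] R (v ∗ w)ᵀ, with ∗ the entrywise product. -/
def eta (R : Matrix ι ι ℤ) (v w : ι → ℤ) : ℤ := bil R (v + w - v * w) (v * w)

/-- bitwise XOR of 0/1 integer vectors, re-embedded as a 0/1 integer vector. -/
def vxor (v w : ι → ℤ) : ι → ℤ := fun i => v i + w i - 2 * (v i * w i)

/-- ξ_k = exp(2πi/2^k). -/
def xi (k : ℕ) : ℂ := Complex.exp (2 * Real.pi * Complex.I / 2 ^ k)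

/-- τ_R^{(k)} = diag(ξ^{v R vᵀ mod 2^k}), indexed by v ∈ {0,1}^m. -/
def tau (k : ℕ) (R : Matrix ι ι ℤ) : Matrix (ι → ZMod 2) (ι → ZMod 2) ℂ :=
  Matrix.diagonal fun v => xi k ^ (bil R (toZ v) (toZ v) % 2 ^ k)

/-- The Hermitian Pauli matrix E(a,b) extended to integer-vector arguments:
    E(a,b) e_v = i^{a·b mod 4} (−1)^{v·b} e_{v ⊕ a₀}. -/
def EMat (a b : ι → ℤ) : Matrix (ι → ZMod 2) (ι → ZMod 2) ℂ :=
  Matrix.of fun u v =>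
    if u = v + red2 a then Complex.I ^ (dotZ a b % 4) * (-1 : ℂ) ^ dotZ (toZ v) b else 0

/-- 0th binary digit vector of a (componentwise `mod 2`). -/
def dig0 (a : ι → ℤ) : ι → ℤ := fun i => a i % 2

/-- 1st binary digit vector of a. -/
def dig1 (a : ι → ℤ) : ι → ℤ := fun i => (a i / 2) % 2

/-- q^{(k−1)}(v; R, a, b). -/
def qfun (k : ℕ) (R : Matrix ι ι ℤ) (a b v : ι → ℤ) : ℤ :=
  (1 - 2 ^ (k - 2)) * bil R (dig0 a) (dig0 a)
    + 2 ^ (k - 1) * (dotZ (dig0 a) (dig1 b) + dotZ (dig0 b) (dig1 a))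
    + (2 + 2 ^ (k - 1)) * bil R v (dig0 a) - 4 * eta R v (dig0 a)



theorem stmt9 (k : ℕ) (hk : 1 ≤ k) (α β γ : ℤ) :
    ∃ R : Matrix (Fin 2) (Fin 2) ℤ, R.IsSymm ∧
      Matrix.diagonal (fun v : Fin 2 → ZMod 2 =>
          if v 0 = 0 ∧ v 1 = 0 then 1
          else if v 0 = 0 ∧ v 1 = 1 then xi k ^ α
          else if v 0 = 1 ∧ v 1 = 0 then xi k ^ β
          else xi k ^ γ)
        = tau (k + 1) R := by
  refine ⟨!![2*β, γ - α - β; γ - α - β, 2*α], ?_, ?_⟩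
  · ext i j; fin_cases i <;> fin_cases j <;> simp [Matrix.IsSymm]
  have hxne : xi (k+1) ≠ 0 := Complex.exp_ne_zero _
  have hx1 : xi (k+1) ^ ((2:ℤ) ^ (k+1)) = 1 := by
    rw [show ((2:ℤ)^(k+1)) = ((2^(k+1) : ℕ) : ℤ) by push_cast; ring, zpow_natCast,
      xi, ← Complex.exp_nat_mul]
    rw [show ((2^(k+1):ℕ):ℂ) * (2 * Real.pi * Complex.I / 2 ^ (k+1)) = 2*Real.pi*Complex.I by
      have hne : (2:ℂ) ^ (k+1) ≠ 0 := pow_ne_zero _ two_ne_zero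
      push_cast; field_simp]
    exact Complex.exp_two_pi_mul_I
  have hmod : ∀ n : ℤ, xi (k+1) ^ (n % 2^(k+1)) = xi (k+1) ^ n := by
    intro n
    conv_rhs => rw [← Int.emod_add_mul_ediv n (2^(k+1))]
    rw [zpow_add₀ hxne, _root_.zpow_mul, hx1, _root_.one_zpow, mul_one]
  have hsq : ∀ n : ℤ, xi (k+1) ^ (2*n) = xi k ^ n := by
    intro n
    have h2 : xi (k+1) ^ (2:ℤ) = xi k := by
      rw [zpow_two, xi, xi, ← Complex.exp_add]
      congr 1
      have h2k : (2:ℂ)^k ≠ 0 := pow_ne_zero _ two_ne_zero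
      rw [show ((2:ℂ)^(k+1)) = 2 * 2^k by ring]
      field_simp
      ring
    rw [_root_.zpow_mul, h2]
  unfold tau
  refine congrArg Matrix.diagonal (funext fun v => ?_)
  have hone : ((1:ZMod 2).val : ℤ) = 1 := by decide
  have hone' : (ZMod.cast (1:ZMod 2) : ℤ) = 1 := by decide
  have hcases : ∀ x : ZMod 2, x = 0 ∨ x = 1 := by decide
  rcases hcases (v 0) with h0 | h0 <;> rcases hcases (v 1) with h1 | h1 <;>
      simp [h0, h1, bil, toZ, Fin.sum_univ_two, hmod, hone, hone']
  all_goals try rw [show (2*β + (γ - α - β) + (γ - α - β + 2*α) : ℤ) = 2*γ by ring]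
  all_goals exact (hsq _).symm

end

end CliffordHierarchy
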